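/- Fix θ ∈ ℝ and let H₂ = [[0, 0, −e^{−2iθ}], [0, 2, 0], [1, 0, 0]] ∈ ℂ^{3×3}. Then det( conj(H₂P₂′) − conj(P₁′)·H₂ ) = e^{−3iθ}(2 + e^{−iθ})(2 + e^{iθ}), which is nonzero; in particular, for every θ there exists H₂ ∈ ℂ^{3×3} such that conj(H₂P₂′) − conj(P₁′)·H₂ is invertible. -/

import Mathlib

/-- The matrix `P₁′` used in the column-cancellation structure of the rate-`3/2` STBC. -/
noncomputable def P1' (θ : ℝ) : Matrix (Fin 3) (Fin 3) ℂ :=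
  !![0, -1, 0;
     1, 0, 0;
     0, 0, -Complex.exp (2 * θ * Complex.I)]

/-- The matrix `P₂′` used in the column-cancellation structure of the rate-`3/2` STBC. -/
noncomputable def P2' (θ : ℝ) : Matrix (Fin 3) (Fin 3) ℂ :=
  !![0, 0, -Complex.exp (θ * Complex.I);
     Complex.exp (2 * θ * Complex.I), 0, 0;
     0, -Complex.exp (θ * Complex.I), 0]

/-- The particular matrix `H₂` exhibited in the proof of Theorem 3 of the paper. -/
noncomputable def H2mat (θ : ℝ) : Matrix (Fin 3) (Fin 3) ℂ :=
  !![0, 0, -Complex.exp (-(2 * θ) * Complex.I);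
     0, 2, 0;
     1, 0, 0]

/-- Fix `θ ∈ ℝ` and let `H₂` be as above. Then
`det(conj(H₂ P₂′) - conj(P₁′) · H₂) = e^{-3iθ}(2 + e^{-iθ})(2 + e^{iθ}) ≠ 0`; in
particular, for every `θ` there exists `H₂` such that `conj(H₂P₂′) - conj(P₁′)·H₂`
is invertible. -/
lemma det_fin_three_of' (a b c d e f g h i : ℂ) :
    Matrix.det !![a,b,c;d,e,f;g,h,i]
      = a*e*i - a*f*h - b*d*i + b*f*g + c*d*h - c*e*g := by
  simp [Matrix.det_fin_three]

lemma conj_exp_mul_I (a : ℝ) :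
    (starRingEnd ℂ) (Complex.exp (a * Complex.I)) = Complex.exp (-a * Complex.I) := by
  rw [← Complex.exp_conj]
  congr 1
  simp [Complex.conj_I, mul_comm]

theorem det_conj_H2P2_sub_conjP1_H2 (θ : ℝ) :
    ((H2mat θ * P2' θ).map (starRingEnd ℂ) - (P1' θ).map (starRingEnd ℂ) * H2mat θ).det
        = Complex.exp (-(3 * θ) * Complex.I) * (2 + Complex.exp (-θ * Complex.I))
          * (2 + Complex.exp (θ * Complex.I)) ∧
      ((H2mat θ * P2' θ).map (starRingEnd ℂ) - (P1' θ).map (starRingEnd ℂ) * H2mat θ).det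
        ≠ 0 ∧
      ∃ H : Matrix (Fin 3) (Fin 3) ℂ,
        IsUnit ((H * P2' θ).map (starRingEnd ℂ) - (P1' θ).map (starRingEnd ℂ) * H) := by
  have hconj : ∀ a : ℝ, (starRingEnd ℂ) (Complex.exp ((a:ℂ) * Complex.I))
      = Complex.exp (-(a:ℂ) * Complex.I) := conj_exp_mul_I
  have h2 : (starRingEnd ℂ) (Complex.exp (2 * (θ:ℂ) * Complex.I))
      = Complex.exp (-(2 * (θ:ℂ)) * Complex.I) := by
    have := hconj (2 * θ); push_cast at this ⊢; exact this
  have hm2 : (starRingEnd ℂ) (Complex.exp (-(2 * (θ:ℂ)) * Complex.I))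
      = Complex.exp ((2 * (θ:ℂ)) * Complex.I) := by
    have := hconj (-(2 * θ)); push_cast at this ⊢; simpa using this
  have h1 : (starRingEnd ℂ) (Complex.exp ((θ:ℂ) * Complex.I))
      = Complex.exp (-(θ:ℂ) * Complex.I) := hconj θ
  have hdet : ((H2mat θ * P2' θ).map (starRingEnd ℂ) - (P1' θ).map (starRingEnd ℂ) * H2mat θ).det
        = Complex.exp (-(3 * θ) * Complex.I) * (2 + Complex.exp (-θ * Complex.I))
          * (2 + Complex.exp (θ * Complex.I)) := by
    have hM : (H2mat θ * P2' θ).map (starRingEnd ℂ) - (P1' θ).map (starRingEnd ℂ) * H2mat θ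
        = !![0, 2 + Complex.exp ((θ:ℂ)*Complex.I), 0;
             2 * Complex.exp (-(2*(θ:ℂ))*Complex.I), 0, Complex.exp (-(2*(θ:ℂ))*Complex.I);
             Complex.exp (-(2*(θ:ℂ))*Complex.I), 0, -Complex.exp (-(θ:ℂ)*Complex.I)] := by
      have ha : (starRingEnd ℂ) (Complex.exp (-((θ:ℂ) * Complex.I * 2)))
          = Complex.exp ((θ:ℂ) * Complex.I * 2) := by
        rw [show -((θ:ℂ)*Complex.I*2) = -(2*(θ:ℂ))*Complex.I by ring,
          show ((θ:ℂ)*Complex.I*2) = 2*(θ:ℂ)*Complex.I by ring]; exact hm2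
      have hb : (starRingEnd ℂ) (Complex.exp ((θ:ℂ) * Complex.I * 2))
          = Complex.exp (-((θ:ℂ) * Complex.I * 2)) := by
        rw [show -((θ:ℂ)*Complex.I*2) = -(2*(θ:ℂ))*Complex.I by ring,
          show ((θ:ℂ)*Complex.I*2) = 2*(θ:ℂ)*Complex.I by ring]; exact h2
      ext i j
      fin_cases i <;> fin_cases j <;>
        simp [H2mat, P1', P2', Matrix.mul_apply, Fin.sum_univ_three, Matrix.vecHead,
          Matrix.vecTail, h1, h2, hm2, ha, hb, map_ofNat] <;>
        rw [show -(2*(θ:ℂ)*Complex.I) = -(2*(θ:ℂ))*Complex.I by ring, hm2,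
          ← Complex.exp_add,
          show (2*(θ:ℂ)*Complex.I + -((θ:ℂ)*Complex.I)) = (θ:ℂ)*Complex.I by ring,
          add_comm]
    rw [hM, det_fin_three_of']
    rw [show (-(3*(θ:ℂ))*Complex.I) = (-θ*Complex.I) + (-θ*Complex.I) + (-θ*Complex.I) by ring,
      show (-(2*(θ:ℂ))*Complex.I) = (-θ*Complex.I) + (-θ*Complex.I) by ring,
      Complex.exp_add, Complex.exp_add]
    simp only [Complex.exp_add]
    ring
  have hne : ∀ a : ℝ, (2 : ℂ) + Complex.exp ((a:ℂ) * Complex.I) ≠ 0 := by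
    intro a h
    have : ‖Complex.exp ((a:ℂ) * Complex.I)‖ = 1 := Complex.norm_exp_ofReal_mul_I a
    rw [show Complex.exp ((a:ℂ)*Complex.I) = -2 by linear_combination h] at this
    norm_num at this
  have hne0 : ((H2mat θ * P2' θ).map (starRingEnd ℂ) - (P1' θ).map (starRingEnd ℂ) * H2mat θ).det ≠ 0 := by
    rw [hdet]
    refine mul_ne_zero (mul_ne_zero (Complex.exp_ne_zero _) ?_) ?_
    · have := hne (-θ); push_cast at this; simpa using this
    · exact hne θ
  exact ⟨hdet, hne0, H2mat θ, (Matrix.isUnit_iff_isUnit_det _).mpr (isUnit_iff_ne_zero.mpr hne0)⟩
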